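/- Let T : H₁ → H₂ be a bounded linear operator between Hilbert spaces, B ∈ H₁, and suppose B = φ(T*T) C for some C ∈ H₁ with ‖C‖ ≤ ρ, where φ : (0, γ] → (0,∞) is monotonically increasing with lim_{λ→0} φ(λ) = 0, γ ≥ ‖T‖², and sup_{0 ≤ λ ≤ γ} αφ(λ)/(λ+α) ≤ φ(α) for all α > 0. Let B_α = (T*T + αI)⁻¹T*TB. Then ‖B − B_α‖ ≤ ρ φ(α) for every α > 0. -/

import Mathlib

open ContinuousLinearMap

/-- Source-condition error estimate for Tikhonov regularization: if
`B = φ(T*T) C` with `‖C‖ ≤ ρ`, where `φ` is monotonically increasing and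
positive on `(0,γ]` (extended by `φ(0) = 0`), `γ ≥ ‖T‖²`,
`lim_{λ→0⁺} φ(λ) = 0`, and `sup_{0≤λ≤γ} αφ(λ)/(λ+α) ≤ φ(α)` for all `α > 0`,
then the Tikhonov approximation `Bα = (T*T+αI)⁻¹ T*T B` satisfies
`‖B − Bα‖ ≤ ρ φ(α)` for every `α > 0`. -/
theorem stmt12 {H₁ H₂ : Type*}
    [NormedAddCommGroup H₁] [InnerProductSpace ℂ H₁] [CompleteSpace H₁]
    [NormedAddCommGroup H₂] [InnerProductSpace ℂ H₂] [CompleteSpace H₂]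
    (T : H₁ →L[ℂ] H₂) (γ ρ : ℝ) (hγ : ‖T‖ ^ 2 ≤ γ)
    (φ : ℝ → ℝ) (hφ0 : φ 0 = 0)
    (hφmono : MonotoneOn φ (Set.Ioc 0 γ))
    (hφpos : ∀ x ∈ Set.Ioc 0 γ, 0 < φ x)
    (hφlim : Filter.Tendsto φ (nhdsWithin 0 (Set.Ioi 0)) (nhds 0))
    (hsup : ∀ α > (0:ℝ), ∀ l ∈ Set.Icc (0:ℝ) γ, α * φ l / (l + α) ≤ φ α)
    (C B : H₁) (hC : ‖C‖ ≤ ρ)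
    (hB : B = cfc φ (adjoint T ∘L T) C)
    (α : ℝ) (hα : 0 < α) (Bα : H₁)
    (hBα : (adjoint T) (T Bα) + (α : ℂ) • Bα = (adjoint T) (T B)) :
    ‖B - Bα‖ ≤ ρ * φ α := by
  have hρ : 0 ≤ ρ := le_trans (norm_nonneg C) hC
  have hγ0 : 0 ≤ γ := le_trans (sq_nonneg _) hγ
  have hφα : 0 ≤ φ α := by
    have := hsup α hα 0 ⟨le_refl 0, hγ0⟩
    simpa [hφ0] using this
  set S : H₁ →L[ℂ] H₁ := adjoint T ∘L T with hSdef
  -- injectivity of S + α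
  have hinj : ∀ x : H₁, S x + (α : ℂ) • x = 0 → x = 0 := by
    intro x hx
    have h1 : inner ℂ (S x + (α : ℂ) • x) x = (0 : ℂ) := by rw [hx]; simp
    rw [inner_add_left, inner_smul_left] at h1
    have h2 : (inner ℂ (S x) x : ℂ) = ((‖T x‖ ^ 2 : ℝ) : ℂ) := by
      have hrw : S x = adjoint T (T x) := rfl
      rw [hrw, adjoint_inner_left T x (T x), inner_self_eq_norm_sq_to_K (𝕜 := ℂ) (T x)]
      norm_cast
    rw [h2, inner_self_eq_norm_sq_to_K x] at h1
    have h3 : (‖T x‖ ^ 2 : ℝ) + α * ‖x‖ ^ 2 = 0 := by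
      have h4 := congrArg Complex.re h1
      simpa [← Complex.ofReal_pow] using h4
    have hx0 : ‖x‖ ^ 2 = 0 := by nlinarith [sq_nonneg ‖T x‖, sq_nonneg ‖x‖]
    simpa using pow_eq_zero_iff (n := 2) (by norm_num) |>.mp hx0
  rcases subsingleton_or_nontrivial H₁ with hss | hnt
  · have : B - Bα = 0 := Subsingleton.elim _ _
    rw [this, norm_zero]
    positivity
  -- S is positive selfadjoint
  have hSpos : S.IsPositive := by
    have := (isPositive_one (E := H₂)).adjoint_conj T
    have h1 : (1 : H₂ →L[ℂ] H₂) ∘L T = T := by ext y; simp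
    rw [h1] at this
    exact this
  have hSsa : IsSelfAdjoint S := hSpos.isSelfAdjoint
  have hSnonneg : (0 : H₁ →L[ℂ] H₁) ≤ S := (nonneg_iff_isPositive S).mpr hSpos
  have hspec : spectrum ℝ S ⊆ Set.Icc 0 γ := by
    intro x hx
    refine ⟨spectrum_nonneg_of_nonneg hSnonneg hx, ?_⟩
    have h1 : ‖x‖ ≤ ‖S‖ := spectrum.norm_le_norm_of_mem hx
    have h2 : ‖S‖ = ‖T‖ * ‖T‖ := norm_adjoint_comp_self T
    calc x ≤ ‖x‖ := Real.le_norm_self x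
      _ ≤ ‖S‖ := h1
      _ ≤ γ := by rw [h2, ← sq]; exact hγ
  by_cases hcont : ContinuousOn φ (spectrum ℝ S)
  · -- main case
    set ψ : ℝ → ℝ := fun l => α * φ l / (l + α) with hψdef
    have hden : ∀ x ∈ spectrum ℝ S, x + α ≠ 0 := fun x hx =>
      ne_of_gt (by have := (hspec hx).1; linarith)
    have hψcont : ContinuousOn ψ (spectrum ℝ S) :=
      ((continuousOn_const.mul hcont).div
        ((continuousOn_id.add continuousOn_const)) hden)
    set D : H₁ := cfc ψ S C with hDdef
    -- operator identity
    have hop : S * cfc ψ S + α • cfc ψ S = α • cfc φ S := by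
      have e1 : cfc (fun l : ℝ => l * ψ l) S = S * cfc ψ S := by
        have := cfc_mul (fun l : ℝ => l) ψ S (continuous_id.continuousOn) hψcont
        simpa [cfc_id' ℝ S] using this
      have e2 : cfc (fun l : ℝ => α * ψ l) S = α • cfc ψ S :=
        cfc_const_mul α ψ S hψcont
      have e3 : cfc (fun l : ℝ => α * φ l) S = α • cfc φ S :=
        cfc_const_mul α φ S hcont
      have e4 : cfc (fun l : ℝ => l * ψ l + α * ψ l) S
          = cfc (fun l : ℝ => l * ψ l) S + cfc (fun l : ℝ => α * ψ l) S :=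
        cfc_add S _ _ (continuousOn_id.mul hψcont) (continuousOn_const.mul hψcont)
      have e5 : cfc (fun l : ℝ => l * ψ l + α * ψ l) S
          = cfc (fun l : ℝ => α * φ l) S := by
        apply cfc_congr
        intro x hx
        have hne := hden x hx
        field_simp [hψdef]
        simp only [hψdef]; field_simp
      rw [← e1, ← e2, ← e4, e5, e3]
    -- vector identity for D
    have hsm : ∀ y : H₁, (α : ℂ) • y = α • y := fun y => by
      rw [← algebraMap_smul ℂ α y]; rfl
    have hD : S D + (α : ℂ) • D = (α : ℂ) • B := by
      have h := congrArg (fun (A : H₁ →L[ℂ] H₁) => A C) hop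
      simp only [add_apply, mul_apply, smul_apply, coe_smul', Pi.smul_apply] at h
      rw [hB, hDdef, hsm D, hsm (cfc φ S C)]
      exact h
    -- vector identity for E := B - Bα
    have hE : S (B - Bα) + (α : ℂ) • (B - Bα) = (α : ℂ) • B := by
      have hSB : S Bα + (α : ℂ) • Bα = S B := hBα
      simp only [map_sub, smul_sub]
      rw [← hSB]
      abel
    have hED : B - Bα = D := by
      have key : S (B - Bα) + (α : ℂ) • (B - Bα) = S D + (α : ℂ) • D :=
        hE.trans hD.symm
      have h0 : S ((B - Bα) - D) + (α : ℂ) • ((B - Bα) - D) = 0 := by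
        have hre : S ((B - Bα) - D) + (α : ℂ) • ((B - Bα) - D)
            = (S (B - Bα) + (α : ℂ) • (B - Bα)) - (S D + (α : ℂ) • D) := by
          simp only [map_sub, smul_sub]; abel
        rw [hre, key, sub_self]
      have := hinj _ h0
      rwa [sub_eq_zero] at this
    rw [hED, hDdef]
    have hnorm : ‖cfc ψ S‖ ≤ φ α := by
      apply norm_cfc_le hφα
      intro x hx
      have hx0 := (hspec hx).1
      have hφx : 0 ≤ φ x := by
        rcases eq_or_lt_of_le hx0 with h | h
        · simp [← h, hφ0]
        · exact le_of_lt (hφpos x ⟨h, (hspec hx).2⟩)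
      have hψx : 0 ≤ ψ x := by
        apply div_nonneg (by positivity)
        linarith
      rw [Real.norm_of_nonneg hψx]
      exact hsup α hα x (hspec hx)
    calc ‖cfc ψ S C‖ ≤ ‖cfc ψ S‖ * ‖C‖ := le_opNorm _ _
      _ ≤ φ α * ρ := mul_le_mul hnorm hC (norm_nonneg C) hφα
      _ = ρ * φ α := mul_comm _ _
  · -- junk case: cfc φ S = 0
    have hB0 : B = 0 := by
      rw [hB, cfc_apply_of_not_continuousOn S hcont]; rfl
    have hBα0 : Bα = 0 := by
      apply hinj
      rw [hB0] at hBα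
      simpa [hSdef] using hBα
    rw [hB0, hBα0, sub_zero, norm_zero]
    positivity
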